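/- With Pecker's polynomials P_m, if m ≥ 2 and all y_i > 0, then P_m(y₁,...,y_m, 0) > 0. -/

import Mathlib

noncomputable def pecker : (m : ℕ) → (Fin (m + 1) → ℝ) → ℝ → ℝ
  | 0, y, t => t - y 0
  | m + 1, y, t =>
      pecker m
        (fun k : Fin (m + 1) =>
          y k.succ * ∑ i : Fin (k.1 + 1), y ⟨i.1, by have := i.isLt; have := k.isLt; omega⟩)
        ((t - ∑ i, y i) ^ 2)

noncomputable def peckerA : (m : ℕ) → (Fin (m + 1) → ℝ) → ℝ
  | 0, y => y 0
  | m + 1, y =>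
      peckerA m
        (fun k : Fin (m + 1) =>
          y k.succ * ∑ i : Fin (k.1 + 1), y ⟨i.1, by have := i.isLt; have := k.isLt; omega⟩)

lemma sq_sum (f : ℕ → ℝ) : ∀ n, (∑ i ∈ Finset.range (n+1), f i)^2 =
    ∑ i ∈ Finset.range (n+1), (f i)^2 +
      2 * ∑ k ∈ Finset.range n, f (k+1) * ∑ i ∈ Finset.range (k+1), f i := by
  intro n
  induction n with
  | zero => simp
  | succ n ih =>
      rw [Finset.sum_range_succ f (n+1), Finset.sum_range_succ (fun i => (f i)^2) (n+1),
        Finset.sum_range_succ (fun k => f (k+1) * ∑ i ∈ Finset.range (k+1), f i) n]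
      linear_combination ih

lemma key2 (m : ℕ) (y : Fin (m + 2) → ℝ) (hy : ∀ i, 0 ≤ y i) :
    2 * ∑ k : Fin (m + 1),
        (y k.succ * ∑ i : Fin (k.1 + 1), y ⟨i.1, by have := i.isLt; have := k.isLt; omega⟩)
      ≤ (∑ i, y i) ^ 2 := by
  set f : ℕ → ℝ := fun j => if h : j < m + 2 then y ⟨j, h⟩ else 0 with hf
  have hS : (∑ i, y i) = ∑ i ∈ Finset.range (m+2), f i := by
    rw [← Fin.sum_univ_eq_sum_range]
    apply Finset.sum_congr rfl
    intro i _
    simp [hf, i.isLt]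
  have hS' : (∑ k : Fin (m + 1),
        (y k.succ * ∑ i : Fin (k.1 + 1), y ⟨i.1, by have := i.isLt; have := k.isLt; omega⟩))
      = ∑ k ∈ Finset.range (m+1), f (k+1) * ∑ i ∈ Finset.range (k+1), f i := by
    rw [← Fin.sum_univ_eq_sum_range (f := fun k => f (k+1) * ∑ i ∈ Finset.range (k+1), f i)]
    apply Finset.sum_congr rfl
    intro k _
    congr 1
    · simp [hf, Fin.succ]; intro h; have := k.isLt; omega
    · rw [← Fin.sum_univ_eq_sum_range]
      apply Finset.sum_congr rfl
      intro i _
      have : i.1 < m + 2 := by omega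
      simp [hf, this]
  have hid := sq_sum f (m+1)
  have h3 : 0 ≤ ∑ i ∈ Finset.range (m+2), (f i)^2 :=
    Finset.sum_nonneg (fun i _ => sq_nonneg _)
  rw [hS', hS]
  linarith

lemma key : ∀ m (y : Fin (m+1) → ℝ), (∀ i, 0 < y i) → ∀ t, 2 * ∑ i, y i ≤ t →
    0 < pecker m y t := by
  intro m
  induction m with
  | zero =>
      intro y hy t ht
      simp only [pecker]
      have := hy 0
      simp [Fin.sum_univ_one] at ht
      linarith
  | succ m ih =>
      intro y hy t ht
      simp only [pecker]
      set y' : Fin (m+1) → ℝ := fun k : Fin (m + 1) =>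
          y k.succ * ∑ i : Fin (k.1 + 1), y ⟨i.1, by have := i.isLt; have := k.isLt; omega⟩ with hy'
      apply ih
      · intro k
        apply mul_pos (hy _)
        apply Finset.sum_pos (fun i _ => hy _)
        exact Finset.univ_nonempty
      · have h2 := key2 m y (fun i => (hy i).le)
        have hSpos : 0 < ∑ i, y i :=
          Finset.sum_pos (fun i _ => hy i) Finset.univ_nonempty
        have h1 : (∑ i, y i) ≤ t - ∑ i, y i := by linarith
        have : (∑ i, y i)^2 ≤ (t - ∑ i, y i)^2 := by nlinarith
        calc 2 * ∑ k, y' k ≤ (∑ i, y i)^2 := h2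
          _ ≤ (t - ∑ i, y i)^2 := this

theorem stmt15 (m : ℕ) (hm : 1 ≤ m) (y : Fin (m + 1) → ℝ) (hy : ∀ i, 0 < y i) :
    0 < pecker m y 0 := by
  obtain ⟨n, rfl⟩ : ∃ n, m = n + 1 := ⟨m - 1, by omega⟩
  simp only [pecker]
  apply key
  · intro k
    apply mul_pos (hy _)
    exact Finset.sum_pos (fun i _ => hy _) Finset.univ_nonempty
  · have h2 := key2 n y (fun i => (hy i).le)
    have : (0 - ∑ i, y i)^2 = (∑ i, y i)^2 := by ring
    rw [this]
    exact h2
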